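/- Let n ≥ 1 and d ≥ 0, and let P ∈ ℝ[X_1,…,X_n] be a non-zero multi-affine polynomial of total degree at most d. Then the complement ℝ^n \ Z(P, ℝ^n) = {x ∈ ℝ^n : P(x) ≠ 0} has at most 2^d connected components (with respect to the Euclidean topology on ℝ^n). -/

import Mathlib

open MvPolynomial


open MvPolynomial Finset

namespace MAaux

variable {n : ℕ}

lemma prod_update (x : Fin n → ℝ) (i : Fin n) (t : ℝ) (m : Fin n →₀ ℕ) :
    (∏ j, Function.update x i t j ^ m j) = t ^ m i * ∏ j ∈ univ.erase i, x j ^ m j := by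
  rw [← Finset.mul_prod_erase univ _ (mem_univ i), Function.update_self]
  congr 1
  exact Finset.prod_congr rfl fun j hj => by
    rw [Function.update_of_ne (Finset.ne_of_mem_erase hj)]

lemma pderiv_eq_sum (i : Fin n) (P : MvPolynomial (Fin n) ℝ) :
    pderiv i P = ∑ m ∈ P.support, monomial (m - Finsupp.single i 1) (coeff m P * (m i : ℝ)) := by
  conv_lhs => rw [← P.support_sum_monomial_coeff, map_sum]
  exact Finset.sum_congr rfl fun m _ => pderiv_monomial

lemma sub_single_apply_self (m : Fin n →₀ ℕ) (i : Fin n) :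
    (m - Finsupp.single i 1 : Fin n →₀ ℕ) i = m i - 1 := by
  rw [Finsupp.tsub_apply, Finsupp.single_eq_same]

lemma sub_single_apply_ne (m : Fin n →₀ ℕ) {i j : Fin n} (h : j ≠ i) :
    (m - Finsupp.single i 1 : Fin n →₀ ℕ) j = m j := by
  rw [Finsupp.tsub_apply, Finsupp.single_eq_of_ne' (Ne.symm h), Nat.sub_zero]

lemma pderiv_coeff {i : Fin n} {P : MvPolynomial (Fin n) ℝ} {m₀ : Fin n →₀ ℕ}
    (hm₀ : m₀ ∈ P.support) (hi : m₀ i ≠ 0) :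
    coeff (m₀ - Finsupp.single i 1) (pderiv i P) = coeff m₀ P * (m₀ i : ℝ) := by
  rw [pderiv_eq_sum, coeff_sum]
  rw [Finset.sum_eq_single m₀]
  · rw [coeff_monomial, if_pos rfl]
  · intro m hm hne
    rw [coeff_monomial]
    rcases Nat.eq_zero_or_pos (m i) with h0 | h0
    · simp [h0]
    · rw [if_neg]
      intro heq
      apply hne
      ext j
      rcases eq_or_ne j i with rfl | hj
      · have h1 : m j - 1 = m₀ j - 1 := by
          rw [← sub_single_apply_self m j, ← sub_single_apply_self m₀ j, heq]
        omega
      · rw [← sub_single_apply_ne m hj, ← sub_single_apply_ne m₀ hj, heq]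
  · intro h; exact absurd hm₀ h

lemma pderiv_ne_zero {i : Fin n} {P : MvPolynomial (Fin n) ℝ} {m₀ : Fin n →₀ ℕ}
    (hm₀ : m₀ ∈ P.support) (hi : m₀ i ≠ 0) : pderiv i P ≠ 0 := by
  intro h
  have := pderiv_coeff hm₀ hi
  rw [h, coeff_zero] at this
  have hc : coeff m₀ P ≠ 0 := mem_support_iff.mp hm₀
  exact mul_ne_zero hc (Nat.cast_ne_zero.mpr hi) this.symm

lemma support_pderiv_subset (i : Fin n) (P : MvPolynomial (Fin n) ℝ) :
    (pderiv i P).support ⊆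
    (P.support.filter fun m => m i ≠ 0).image (fun m => m - Finsupp.single i 1) := by
  classical
  rw [pderiv_eq_sum]
  refine subset_trans support_sum ?_
  intro m' hm'
  rw [Finset.mem_biUnion] at hm'
  obtain ⟨m, hm, hm'mem⟩ := hm'
  rcases Nat.eq_zero_or_pos (m i) with h0 | h0
  · simp [h0] at hm'mem
  · have : m' = m - Finsupp.single i 1 := by
      have := support_monomial (a := coeff m P * (m i : ℝ)) (s := m - Finsupp.single i 1)
      by_cases hz : coeff m P * (m i : ℝ) = 0
      · simp [hz] at hm'mem
      · rw [support_monomial, if_neg hz] at hm'mem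
        exact Finset.mem_singleton.mp hm'mem
    subst this
    exact Finset.mem_image.mpr ⟨m, Finset.mem_filter.mpr ⟨hm, by omega⟩, rfl⟩

lemma degreeOf_pderiv_le (i j : Fin n) (P : MvPolynomial (Fin n) ℝ) :
    degreeOf j (pderiv i P) ≤ degreeOf j P := by
  rw [degreeOf_le_iff]
  intro m' hm'
  obtain ⟨m, hm, rfl⟩ := Finset.mem_image.mp (support_pderiv_subset i P hm')
  have hm2 := (Finset.mem_filter.mp hm).1
  have h1 : m j ≤ degreeOf j P := degreeOf_le_iff.mp le_rfl m hm2
  rcases eq_or_ne j i with rfl | hj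
  · rw [sub_single_apply_self]; omega
  · rw [sub_single_apply_ne _ hj]; exact h1

lemma degreeOf_pderiv_self (i : Fin n) (P : MvPolynomial (Fin n) ℝ)
    (hma : degreeOf i P ≤ 1) : degreeOf i (pderiv i P) = 0 := by
  rw [← Nat.le_zero, degreeOf_le_iff]
  intro m' hm'
  obtain ⟨m, hm, rfl⟩ := Finset.mem_image.mp (support_pderiv_subset i P hm')
  have hm2 := (Finset.mem_filter.mp hm).1
  have h1 : m i ≤ 1 := degreeOf_le_iff.mp hma m hm2
  rw [sub_single_apply_self]; omega

lemma sum_sub_single (m : Fin n →₀ ℕ) (i : Fin n) (h : m i ≠ 0) :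
    ((m - Finsupp.single i 1).sum fun _ e => e) + 1 = m.sum fun _ e => e := by
  have hle : Finsupp.single i 1 ≤ m := Finsupp.single_le_iff.mpr (by omega)
  have heq : (m - Finsupp.single i 1) + Finsupp.single i 1 = m := tsub_add_cancel_of_le hle
  conv_rhs => rw [← heq]
  rw [Finsupp.sum_add_index' (fun _ => rfl) (fun _ _ _ => rfl)]
  simp [Finsupp.sum_single_index]

lemma totalDegree_pderiv_le (i : Fin n) (P : MvPolynomial (Fin n) ℝ) (d : ℕ)
    (h : P.totalDegree ≤ d + 1) : (pderiv i P).totalDegree ≤ d := by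
  rw [totalDegree]
  refine Finset.sup_le fun m' hm' => ?_
  obtain ⟨m, hm, rfl⟩ := Finset.mem_image.mp (support_pderiv_subset i P hm')
  obtain ⟨hm2, hmi⟩ := Finset.mem_filter.mp hm
  have h1 := le_totalDegree hm2
  have h2 := sum_sub_single m i hmi
  omega

end MAaux

namespace MAaux2
open MAaux

variable {n : ℕ}

lemma eval_pderiv_eq (i : Fin n) (P : MvPolynomial (Fin n) ℝ) (hma : degreeOf i P ≤ 1)
    (x : Fin n → ℝ) :
    eval x (pderiv i P)
      = ∑ m ∈ P.support, coeff m P * (m i : ℝ) * ∏ j ∈ univ.erase i, x j ^ m j := by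
  rw [pderiv_eq_sum, map_sum]
  refine Finset.sum_congr rfl fun m hm => ?_
  rw [eval_monomial]
  rw [Finsupp.prod_fintype _ _ (fun j => pow_zero (x j))]
  rw [← Finset.mul_prod_erase univ _ (mem_univ i)]
  have h1 : m i ≤ 1 := degreeOf_le_iff.mp hma m hm
  have h2 : (m - Finsupp.single i 1 : Fin n →₀ ℕ) i = 0 := by
    rw [sub_single_apply_self]; omega
  rw [h2, pow_zero, one_mul]
  rw [Finset.prod_congr rfl fun j hj => by
    rw [sub_single_apply_ne m (Finset.ne_of_mem_erase hj)]]

lemma eval_update_slope (i : Fin n) (P : MvPolynomial (Fin n) ℝ) (hma : degreeOf i P ≤ 1)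
    (x : Fin n → ℝ) (t : ℝ) :
    eval (Function.update x i t) P
      = eval x (pderiv i P) * t + eval (Function.update x i 0) P := by
  rw [eval_pderiv_eq i P hma x, eval_eq', eval_eq', Finset.sum_mul, ← Finset.sum_add_distrib]
  refine Finset.sum_congr rfl fun m hm => ?_
  have h1 : m i ≤ 1 := degreeOf_le_iff.mp hma m hm
  rw [prod_update, prod_update]
  rcases Nat.le_one_iff_eq_zero_or_eq_one.mp h1 with h | h <;> rw [h] <;> simp <;> ring

lemma eval_update_invar {i : Fin n} {Q : MvPolynomial (Fin n) ℝ} (h : degreeOf i Q = 0)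
    (x : Fin n → ℝ) (t : ℝ) : eval (Function.update x i t) Q = eval x Q := by
  rw [eval_eq', eval_eq']
  refine Finset.sum_congr rfl fun m hm => ?_
  have h1 : m i = 0 := by
    have := degreeOf_le_iff.mp (le_of_eq h) m hm; omega
  rw [prod_update, h1, pow_zero, one_mul,
    ← Finset.mul_prod_erase univ (fun j => x j ^ m j) (mem_univ i), h1, pow_zero, one_mul]

lemma exists_var {P : MvPolynomial (Fin n) ℝ} (h : P.totalDegree ≠ 0) :
    ∃ (i : Fin n) (m₀ : Fin n →₀ ℕ), m₀ ∈ P.support ∧ m₀ i ≠ 0 := by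
  by_contra hc
  push_neg at hc
  exact h ((totalDegree_eq_zero_iff (Fin n) P).mpr fun m hm x => hc x m hm)

lemma const_eval {P : MvPolynomial (Fin n) ℝ} (h : P.totalDegree = 0) (x y : Fin n → ℝ) :
    eval x P = eval y P := by
  rw [eval_eq', eval_eq']
  refine Finset.sum_congr rfl fun m hm => ?_
  have h1 := (totalDegree_eq_zero_iff (Fin n) P).mp h m hm
  have hz : ∀ (z : Fin n → ℝ), (∏ j, z j ^ m j) = 1 := fun z =>
    Finset.prod_eq_one fun j _ => by rw [h1 j, pow_zero]
  rw [hz x, hz y]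

end MAaux2

namespace MAaux3

variable {n : ℕ}

lemma coeff_zero_of_two {Q : MvPolynomial (Fin n) ℝ} (hma : ∀ j : Fin n, degreeOf j Q ≤ 1)
    {m : Fin n →₀ ℕ} {j : Fin n} (hj : 2 ≤ m j) : coeff m Q = 0 := by
  by_contra h
  have hm : m ∈ Q.support := mem_support_iff.mpr h
  have := degreeOf_le_iff.mp (hma j) m hm
  omega

lemma eval_special {Q : MvPolynomial (Fin n) ℝ} (hma : ∀ j : Fin n, degreeOf j Q ≤ 1)
    {m : Fin n →₀ ℕ} (hm1 : ∀ j, m j ≤ 1)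
    (hprev : ∀ m' : Fin n →₀ ℕ, m' ≠ m → m'.support ⊆ m.support → coeff m' Q = 0)
    (t : ℝ) (χ : Fin n → ℝ) :
    eval (fun j => if j ∈ m.support then t * χ j else 0) Q
      = coeff m Q * ∏ j ∈ m.support, (t * χ j) := by
  rw [eval_eq']
  rw [Finset.sum_eq_single m]
  · congr 1
    rw [← Finset.prod_subset (Finset.subset_univ m.support) (fun j _ hj => by
      rw [Finsupp.notMem_support_iff.mp hj, pow_zero])]
    refine Finset.prod_congr rfl fun j hj => ?_
    have h1 : m j = 1 := by
      have := Finsupp.mem_support_iff.mp hj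
      have := hm1 j
      omega
    rw [if_pos hj, h1, pow_one]
  · intro m' hm' hne
    by_cases hsub : m'.support ⊆ m.support
    · rw [hprev m' hne hsub, zero_mul]
    · rw [Finset.not_subset] at hsub
      obtain ⟨j, hj1, hj2⟩ := hsub
      have : (fun j => if j ∈ m.support then t * χ j else 0) j ^ m' j = 0 := by
        simp only [if_neg hj2]
        exact zero_pow (Finsupp.mem_support_iff.mp hj1)
      rw [Finset.prod_eq_zero (mem_univ j) this, mul_zero]
  · intro h
    rw [notMem_support_iff.mp h, zero_mul]

lemma nonneg_zero {Q : MvPolynomial (Fin n) ℝ} (hma : ∀ j : Fin n, degreeOf j Q ≤ 1)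
    {ε : ℝ} (hε : 0 < ε) (hpos : ∀ v : Fin n → ℝ, ‖v‖ < ε → 0 ≤ eval v Q)
    (h0 : eval (0 : Fin n → ℝ) Q = 0) : Q = 0 := by
  suffices h : ∀ (k : ℕ) (m : Fin n →₀ ℕ), m.support.card ≤ k → coeff m Q = 0 by
    ext m; rw [coeff_zero]; exact h m.support.card m le_rfl
  intro k
  induction k with
  | zero =>
    intro m hm
    have hsupp : m.support = ∅ := Finset.card_eq_zero.mp (Nat.le_zero.mp hm)
    have hm0 : m = 0 := Finsupp.support_eq_empty.mp hsupp
    subst hm0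
    have h1 : ∀ j, (0 : Fin n →₀ ℕ) j ≤ 1 := fun j => by simp
    have h2 := eval_special hma h1
      (fun m' hne hsub => absurd (Finsupp.support_eq_empty.mp
        (Finset.subset_empty.mp (by simpa using hsub))) hne) 0 (fun _ => 1)
    simp only [Finsupp.support_zero, Finset.notMem_empty, if_false, Finset.prod_empty,
      mul_one] at h2
    rw [← h2]
    exact h0
  | succ k ih =>
    intro m hm
    by_cases h2 : ∀ j, m j ≤ 1
    · by_cases hcase : m.support.card ≤ k
      · exact ih m hcase
      have hprev : ∀ m' : Fin n →₀ ℕ, m' ≠ m → m'.support ⊆ m.support → coeff m' Q = 0 := by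
        intro m' hne hsub
        by_cases h2' : ∀ j, m' j ≤ 1
        · apply ih
          have hne' : m'.support ≠ m.support := by
            intro heq
            apply hne
            ext j
            by_cases hj : j ∈ m.support
            · have hj' : j ∈ m'.support := heq ▸ hj
              have := Finsupp.mem_support_iff.mp hj
              have := Finsupp.mem_support_iff.mp hj'
              have := h2 j; have := h2' j
              omega
            · rw [Finsupp.notMem_support_iff.mp hj,
                Finsupp.notMem_support_iff.mp (fun hj' => hj (heq ▸ hj' : j ∈ m.support))]
          have := Finset.card_lt_card (lt_of_le_of_ne hsub hne')
          omega
        · push_neg at h2'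
          obtain ⟨j, hj⟩ := h2'
          exact coeff_zero_of_two hma (m := m') (j := j) (by omega)
      -- support is nonempty
      have hpos' : 0 < m.support.card := by omega
      obtain ⟨j₀, hj₀⟩ := Finset.card_pos.mp hpos'
      set t : ℝ := ε / 2 with ht
      have htpos : (0 : ℝ) < t := by positivity
      have hnorm : ∀ χ : Fin n → ℝ, (∀ j, |χ j| ≤ 1) →
          ‖(fun j => if j ∈ m.support then t * χ j else 0 : Fin n → ℝ)‖ < ε := by
        intro χ hχ
        have hb : ∀ j, ‖(if j ∈ m.support then t * χ j else 0 : ℝ)‖ ≤ t := by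
          intro j
          by_cases hj : j ∈ m.support
          · rw [if_pos hj, Real.norm_eq_abs, abs_mul, abs_of_pos htpos]
            calc t * |χ j| ≤ t * 1 := mul_le_mul_of_nonneg_left (hχ j) htpos.le
              _ = t := mul_one t
          · rw [if_neg hj, norm_zero]; exact htpos.le
        have hle : ‖(fun j => if j ∈ m.support then t * χ j else 0 : Fin n → ℝ)‖ ≤ t :=
          (pi_norm_le_iff_of_nonneg htpos.le).mpr hb
        have hte : t < ε := by rw [ht]; linarith
        linarith
      have key1 := eval_special hma h2 hprev t (fun _ => 1)
      have key2 := eval_special hma h2 hprev t (fun j => if j = j₀ then -1 else 1)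
      have hp1 : (∏ j ∈ m.support, (t * (1:ℝ))) = t ^ m.support.card := by
        simp [Finset.prod_const]
      have hp2 : (∏ j ∈ m.support, (t * (if j = j₀ then -1 else 1 : ℝ)))
          = -(t ^ m.support.card) := by
        rw [← Finset.mul_prod_erase m.support _ hj₀, if_pos rfl]
        rw [Finset.prod_congr rfl (fun j hj => by
          rw [if_neg (Finset.ne_of_mem_erase hj), mul_one])]
        rw [Finset.prod_const, Finset.card_erase_of_mem hj₀]
        obtain ⟨c, hc⟩ : ∃ c, m.support.card = c + 1 := ⟨m.support.card - 1, by omega⟩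
        rw [hc]
        simp only [Nat.add_sub_cancel, pow_succ]
        ring
      have hv1 := hpos _ (hnorm (fun _ => 1) (fun j => by norm_num))
      have hv2 := hpos _ (hnorm (fun j => if j = j₀ then -1 else 1) (fun j => by
        by_cases hj : j = j₀ <;> simp [hj]))
      rw [key1, hp1] at hv1
      rw [key2, hp2] at hv2
      have htp : (0:ℝ) < t ^ m.support.card := by positivity
      nlinarith
    · push_neg at h2
      obtain ⟨j, hj⟩ := h2
      exact coeff_zero_of_two hma (m := m) (j := j) (by omega)

end MAaux3

namespace MAaux4

variable {n : ℕ}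

lemma eval_bind₁ (x : Fin n → ℝ) (g : Fin n → MvPolynomial (Fin n) ℝ)
    (φ : MvPolynomial (Fin n) ℝ) :
    eval x (bind₁ g φ) = eval (fun j => eval x (g j)) φ :=
  eval₂Hom_bind₁ (RingHom.id ℝ) x g φ

lemma degreeOf_bind₁_shift (c : Fin n → ℝ) (A : MvPolynomial (Fin n) ℝ)
    (hma : ∀ j : Fin n, degreeOf j A ≤ 1) (j : Fin n) :
    degreeOf j (bind₁ (fun k => X k + C (c k)) A) ≤ 1 := by
  conv_lhs => rw [← A.support_sum_monomial_coeff, map_sum]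
  refine le_trans (degreeOf_sum_le _ _ _) ?_
  rw [Finset.sup_le_iff]
  intro m hm
  rw [bind₁_monomial]
  refine le_trans (degreeOf_mul_le _ _ _) ?_
  rw [degreeOf_C, zero_add]
  refine le_trans (degreeOf_prod_le _ _ _) ?_
  have hterm : ∀ k ∈ m.support,
      degreeOf j ((X k + C (c k)) ^ m k) ≤ if j = k then m k else 0 := by
    intro k _
    refine le_trans (degreeOf_pow_le _ _ _) ?_
    have h1 : degreeOf j (X k + C (c k) : MvPolynomial (Fin n) ℝ) ≤ if j = k then 1 else 0 := by
      refine le_trans (degreeOf_add_le _ _ _) ?_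
      rw [degreeOf_C, degreeOf_X]
      simp
    calc m k * degreeOf j (X k + C (c k) : MvPolynomial (Fin n) ℝ)
        ≤ m k * (if j = k then 1 else 0) := Nat.mul_le_mul_left _ h1
      _ = if j = k then m k else 0 := by split <;> simp
  refine le_trans (Finset.sum_le_sum hterm) ?_
  rw [Finset.sum_ite_eq]
  split
  · next hmem =>
      have := degreeOf_le_iff.mp (hma j) m hm
      exact this
  · exact Nat.zero_le 1

lemma sign_near {A : MvPolynomial (Fin n) ℝ} (hA : A ≠ 0)
    (hma : ∀ j : Fin n, degreeOf j A ≤ 1)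
    {x : Fin n → ℝ} (hx : eval x A = 0) {ε : ℝ} (hε : 0 < ε) {c : ℝ} (hc : c ≠ 0) :
    ∃ y : Fin n → ℝ, ‖y - x‖ < ε ∧ 0 < eval y A * c := by
  by_contra hcon
  push_neg at hcon
  set B := bind₁ (fun k => X k + C (x k)) A with hB
  set Q := C (-c) * B with hQ
  have hmaQ : ∀ j, degreeOf j Q ≤ 1 := fun j => le_trans (degreeOf_mul_le _ _ _)
    (by rw [degreeOf_C, zero_add]; exact degreeOf_bind₁_shift x A hma j)
  have hevalB : ∀ v : Fin n → ℝ, eval v B = eval (fun j => v j + x j) A := by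
    intro v
    have harg : (fun j => eval v (X j + C (x j))) = fun j => v j + x j := by
      funext j; simp
    rw [hB, eval_bind₁, harg]
  have hQpos : ∀ v : Fin n → ℝ, ‖v‖ < ε → 0 ≤ eval v Q := by
    intro v hv
    have hsub : (fun j => v j + x j) - x = v := by funext j; simp
    have h1 := hcon (fun j => v j + x j) (by rw [hsub]; exact hv)
    rw [hQ, map_mul, eval_C, hevalB]
    nlinarith [h1]
  have hQ0 : eval (0 : Fin n → ℝ) Q = 0 := by
    rw [hQ, map_mul, eval_C, hevalB]
    have hz : (fun j => (0 : Fin n → ℝ) j + x j) = x := by funext j; simp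
    rw [hz, hx, mul_zero]
  have hQzero := MAaux3.nonneg_zero hmaQ hε hQpos hQ0
  have hBzero : B = 0 := by
    rcases mul_eq_zero.mp hQzero with h | h
    · exact absurd h (C_ne_zero.mpr (neg_ne_zero.mpr hc))
    · exact h
  apply hA
  have h2 : bind₁ (fun k => X k - C (x k)) B = A := by
    rw [hB, bind₁_bind₁]
    have h3 : (fun i : Fin n => bind₁ (fun k : Fin n => (X k - C (x k) : MvPolynomial (Fin n) ℝ))
        (X i + C (x i))) = fun i : Fin n => (X i : MvPolynomial (Fin n) ℝ) := by
      funext i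
      rw [map_add, bind₁_X_right, bind₁_C_right]
      ring
    rw [h3, bind₁_X_left]
    rfl
  rw [hBzero, map_zero] at h2
  exact h2.symm

end MAaux4

namespace MAtop

variable {n : ℕ}

/-- Two points joined by a continuous path inside `W` lie in the same connected component. -/
lemma cc_eq_of_path {W : Set (Fin n → ℝ)} {γ : ℝ → (Fin n → ℝ)} (hγ : Continuous γ)
    {s t : ℝ} (hW : ∀ r ∈ Set.uIcc s t, γ r ∈ W) :
    connectedComponentIn W (γ s) = connectedComponentIn W (γ t) := by
  have hconn : IsPreconnected (γ '' Set.uIcc s t) :=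
    isPreconnected_uIcc.image γ hγ.continuousOn
  have h1 : γ '' Set.uIcc s t ⊆ W := by
    rintro _ ⟨r, hr, rfl⟩
    exact hW r hr
  have h2 := hconn.subset_connectedComponentIn
    (Set.mem_image_of_mem γ Set.left_mem_uIcc) h1
  exact connectedComponentIn_eq (h2 (Set.mem_image_of_mem γ Set.right_mem_uIcc))

section Main

variable (P : MvPolynomial (Fin n) ℝ) (i : Fin n)

/-- The set where `P` does not vanish. -/
def Uset : Set (Fin n → ℝ) := {x | eval x P ≠ 0}

/-- slope (coefficient of the variable `i`). -/
noncomputable def afun (x : Fin n → ℝ) : ℝ := eval x (pderiv i P)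

/-- constant term along direction `i`. -/
noncomputable def bfun (x : Fin n → ℝ) : ℝ := eval (Function.update x i 0) P

noncomputable def Tfun (x : Fin n → ℝ) : ℝ := |bfun P i x| / |afun P i x| + 1

noncomputable def lft (σ : ℝ) (y : Fin n → ℝ) : Fin n → ℝ :=
  Function.update y i (σ * Tfun P i y)

open scoped Classical in
noncomputable def Fmap (σ : ℝ) (K : Set (Fin n → ℝ)) : Set (Fin n → ℝ) :=
  if h : K.Nonempty then connectedComponentIn (Uset P) (lft P i σ h.some) else ∅

variable {P i}

lemma continuous_afun : Continuous (afun P i) := MvPolynomial.continuous_eval _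

lemma continuous_bfun : Continuous (bfun P i) :=
  (MvPolynomial.continuous_eval _).comp (continuous_id.update i continuous_const)

variable (hma : ∀ j : Fin n, degreeOf j P ≤ 1)
include hma

lemma slope_eq (x : Fin n → ℝ) (t : ℝ) :
    eval (Function.update x i t) P = afun P i x * t + bfun P i x :=
  MAaux2.eval_update_slope i P (hma i) x t

lemma eval_self_eq (x : Fin n → ℝ) :
    eval x P = afun P i x * x i + bfun P i x := by
  have := slope_eq (i := i) hma x (x i)
  rwa [Function.update_eq_self] at this

lemma beyond_root_mem (y : Fin n → ℝ) {t : ℝ} (ht : |bfun P i y| < |afun P i y| * |t|) :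
    Function.update y i t ∈ Uset P := by
  rw [Uset, Set.mem_setOf_eq, slope_eq hma]
  intro h
  have h1 : bfun P i y = -(afun P i y * t) := by linarith
  rw [h1, abs_neg, abs_mul] at ht
  linarith

/-- Vertical mobility: two heights of the same sign, both beyond the root,
give the same connected component. -/
lemma vert_cc (y : Fin n → ℝ) {t₁ t₂ : ℝ}
    (h₁ : |bfun P i y| < |afun P i y| * |t₁|)
    (h₂ : |bfun P i y| < |afun P i y| * |t₂|)
    (hsign : 0 < t₁ * t₂) :
    connectedComponentIn (Uset P) (Function.update y i t₁)
      = connectedComponentIn (Uset P) (Function.update y i t₂) := by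
  refine cc_eq_of_path ((continuous_const.update i continuous_id)) ?_
  intro r hr
  rw [Set.mem_uIcc] at hr
  refine beyond_root_mem hma y ?_
  have habs : |t₁| ≤ |r| ∨ |t₂| ≤ |r| := by
    rcases hr with ⟨hl, hu⟩ | ⟨hl, hu⟩ <;> cases abs_cases t₁ <;> cases abs_cases t₂ <;>
      cases abs_cases r <;>
      first
        | (left; nlinarith)
        | (right; nlinarith)
  have hanneg : 0 ≤ |afun P i y| := abs_nonneg _
  rcases habs with h | h
  · calc |bfun P i y| < |afun P i y| * |t₁| := h₁
      _ ≤ |afun P i y| * |r| := by nlinarith [abs_nonneg (bfun P i y)]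
  · calc |bfun P i y| < |afun P i y| * |t₂| := h₂
      _ ≤ |afun P i y| * |r| := by nlinarith [abs_nonneg (bfun P i y)]

lemma lft_height (y : Fin n → ℝ) (hy : afun P i y ≠ 0) {σ : ℝ} (hσ : |σ| = 1) :
    |bfun P i y| < |afun P i y| * |σ * Tfun P i y| := by
  have ha : 0 < |afun P i y| := abs_pos.mpr hy
  have hT : 0 < Tfun P i y := by
    have : 0 ≤ |bfun P i y| / |afun P i y| := div_nonneg (abs_nonneg _) ha.le
    rw [Tfun]; linarith
  rw [abs_mul, hσ, one_mul, abs_of_pos hT, Tfun, mul_add, mul_one,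
    mul_div_cancel₀ _ (ne_of_gt ha)]
  linarith

lemma lft_mem (y : Fin n → ℝ) (hy : afun P i y ≠ 0) {σ : ℝ} (hσ : |σ| = 1) :
    lft P i σ y ∈ Uset P :=
  beyond_root_mem hma y (lft_height hma y hy hσ)

end Main

end MAtop

namespace MAtop

open MvPolynomial Finset

section Main2

variable {n : ℕ} {P : MvPolynomial (Fin n) ℝ} {i : Fin n}
variable (hma : ∀ j : Fin n, degreeOf j P ≤ 1)
include hma

lemma Tfun_pos (z : Fin n → ℝ) : 0 < Tfun P i z := by
  have h : 0 ≤ |bfun P i z| / |afun P i z| := div_nonneg (abs_nonneg _) (abs_nonneg _)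
  rw [Tfun]; linarith

omit hma in
lemma Tfun_pos' (z : Fin n → ℝ) : 0 < Tfun P i z := by
  have h : 0 ≤ |bfun P i z| / |afun P i z| := div_nonneg (abs_nonneg _) (abs_nonneg _)
  rw [Tfun]; linarith

lemma local_const {σ : ℝ} (hσ : |σ| = 1) {y : Fin n → ℝ} (hy : afun P i y ≠ 0) :
    ∃ ε > 0, ∀ z : Fin n → ℝ, dist z y < ε → afun P i z ≠ 0 ∧
      connectedComponentIn (Uset P) (lft P i σ z)
        = connectedComponentIn (Uset P) (lft P i σ y) := by
  have hay : 0 < |afun P i y| := abs_pos.mpr hy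
  set δ : ℝ := |afun P i y| / 2 with hδ
  have hδpos : 0 < δ := by positivity
  set M : ℝ := |bfun P i y| + 1 with hM
  have hMpos : 0 < M := by positivity
  have hopen : IsOpen {z : Fin n → ℝ | δ < |afun P i z| ∧ |bfun P i z| < M} :=
    (isOpen_lt continuous_const (continuous_abs.comp continuous_afun)).inter
      (isOpen_lt (continuous_abs.comp continuous_bfun) continuous_const)
  have hymem : y ∈ {z : Fin n → ℝ | δ < |afun P i z| ∧ |bfun P i z| < M} :=
    ⟨by rw [hδ]; linarith, by rw [hM]; linarith⟩
  obtain ⟨ε, hεpos, hball⟩ := Metric.isOpen_iff.mp hopen y hymem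
  refine ⟨ε, hεpos, fun z hz => ?_⟩
  obtain ⟨hza, hzb⟩ := hball (Metric.mem_ball.mpr hz)
  have hzane : afun P i z ≠ 0 := by
    intro h0; rw [h0, abs_zero] at hza; linarith
  refine ⟨hzane, ?_⟩
  set T : ℝ := M / δ + 1 with hT
  have hTpos : 0 < T := by positivity
  have hway : ∀ w : Fin n → ℝ, δ < |afun P i w| → |bfun P i w| < M →
      |bfun P i w| < |afun P i w| * |σ * T| := by
    intro w hwa hwb
    rw [abs_mul, hσ, one_mul, abs_of_pos hTpos]
    have h2 : δ * T = M + δ := by rw [hT]; field_simp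
    have h3 : δ * T ≤ |afun P i w| * T := mul_le_mul_of_nonneg_right hwa.le hTpos.le
    linarith
  have hσ2 : σ ^ 2 = 1 := by
    have := sq_abs σ
    rw [hσ, one_pow] at this
    linarith
  have hsign : ∀ w : Fin n → ℝ, 0 < (σ * Tfun P i w) * (σ * T) := by
    intro w
    have h1 : (σ * Tfun P i w) * (σ * T) = σ ^ 2 * (Tfun P i w * T) := by ring
    rw [h1, hσ2, one_mul]
    exact mul_pos (Tfun_pos' w) hTpos
  have h1 : connectedComponentIn (Uset P) (lft P i σ z)
      = connectedComponentIn (Uset P) (Function.update z i (σ * T)) :=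
    vert_cc hma z (lft_height hma z hzane hσ) (hway z hza hzb) (hsign z)
  have hymem2 := hymem
  have h2 : connectedComponentIn (Uset P) (lft P i σ y)
      = connectedComponentIn (Uset P) (Function.update y i (σ * T)) :=
    vert_cc hma y (lft_height hma y hy hσ) (hway y hymem2.1 hymem2.2) (hsign y)
  have h3 : connectedComponentIn (Uset P) (Function.update z i (σ * T))
      = connectedComponentIn (Uset P) (Function.update y i (σ * T)) := by
    have hγcont : Continuous (fun r : ℝ => Function.update (z + r • (y - z)) i (σ * T)) := by
      refine Continuous.update ?_ i continuous_const
      exact continuous_const.add (continuous_id.smul continuous_const)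
    have hpath0 : Function.update (z + (0:ℝ) • (y - z)) i (σ * T)
        = Function.update z i (σ * T) := by simp
    have hpath1 : Function.update (z + (1:ℝ) • (y - z)) i (σ * T)
        = Function.update y i (σ * T) := by simp
    rw [← hpath0, ← hpath1]
    refine cc_eq_of_path hγcont ?_
    intro r hr
    rw [Set.uIcc_of_le (by norm_num : (0:ℝ) ≤ 1)] at hr
    obtain ⟨hr0, hr1⟩ := hr
    have hwdist : dist (z + r • (y - z)) y < ε := by
      have heq : z + r • (y - z) - y = (1 - r) • (z - y) := by
        funext j
        simp only [Pi.add_apply, Pi.sub_apply, Pi.smul_apply, smul_eq_mul]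
        ring
      rw [dist_eq_norm, heq, norm_smul, Real.norm_eq_abs, abs_of_nonneg (by linarith)]
      have hzy : ‖z - y‖ = dist z y := (dist_eq_norm z y).symm
      rw [hzy]
      calc (1 - r) * dist z y ≤ 1 * dist z y := by
            have := dist_nonneg (x := z) (y := y)
            nlinarith
        _ = dist z y := one_mul _
        _ < ε := hz
    obtain ⟨hwa, hwb⟩ := hball (Metric.mem_ball.mpr hwdist)
    exact beyond_root_mem hma _ (hway _ hwa hwb)
  rw [h1, h3, ← h2]

lemma const_on_component {σ : ℝ} (hσ : |σ| = 1) {y₀ : Fin n → ℝ} (hy₀ : afun P i y₀ ≠ 0)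
    {y : Fin n → ℝ} (hy : y ∈ connectedComponentIn {x : Fin n → ℝ | afun P i x ≠ 0} y₀) :
    connectedComponentIn (Uset P) (lft P i σ y)
      = connectedComponentIn (Uset P) (lft P i σ y₀) := by
  by_contra hne
  set V : Set (Fin n → ℝ) := {x : Fin n → ℝ | afun P i x ≠ 0} with hV
  set c := connectedComponentIn (Uset P) (lft P i σ y₀) with hc
  set W1 : Set (Fin n → ℝ) :=
    {z | afun P i z ≠ 0 ∧ connectedComponentIn (Uset P) (lft P i σ z) = c} with hW1
  set W2 : Set (Fin n → ℝ) :=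
    {z | afun P i z ≠ 0 ∧ connectedComponentIn (Uset P) (lft P i σ z) ≠ c} with hW2
  have hopen : ∀ z (_ : afun P i z ≠ 0),
      ∃ ε > 0, Metric.ball z ε ⊆
        {w | afun P i w ≠ 0 ∧ connectedComponentIn (Uset P) (lft P i σ w)
          = connectedComponentIn (Uset P) (lft P i σ z)} := by
    intro z hz
    obtain ⟨ε, hε, h⟩ := local_const hma hσ hz
    exact ⟨ε, hε, fun w hw => h w (Metric.mem_ball.mp hw)⟩
  have hW1open : IsOpen W1 := by
    rw [Metric.isOpen_iff]
    intro z hz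
    obtain ⟨ε, hε, h⟩ := hopen z hz.1
    exact ⟨ε, hε, fun w hw => ⟨(h hw).1, by rw [(h hw).2, hz.2]⟩⟩
  have hW2open : IsOpen W2 := by
    rw [Metric.isOpen_iff]
    intro z hz
    obtain ⟨ε, hε, h⟩ := hopen z hz.1
    exact ⟨ε, hε, fun w hw => ⟨(h hw).1, by rw [(h hw).2]; exact hz.2⟩⟩
  have hK : IsPreconnected (connectedComponentIn V y₀) := isPreconnected_connectedComponentIn
  have hsub : connectedComponentIn V y₀ ⊆ W1 ∪ W2 := by
    intro z hz
    have hzV : z ∈ V := connectedComponentIn_subset V y₀ hz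
    by_cases h : connectedComponentIn (Uset P) (lft P i σ z) = c
    · exact Or.inl ⟨hzV, h⟩
    · exact Or.inr ⟨hzV, h⟩
  have hne1 : (connectedComponentIn V y₀ ∩ W1).Nonempty :=
    ⟨y₀, mem_connectedComponentIn hy₀, hy₀, rfl⟩
  have hne2 : (connectedComponentIn V y₀ ∩ W2).Nonempty :=
    ⟨y, hy, connectedComponentIn_subset V y₀ hy, hne⟩
  obtain ⟨z, _, hz1, hz2⟩ := hK W1 W2 hW1open hW2open hsub hne1 hne2
  exact hz2.2 hz1.2

lemma surj (hA : pderiv i P ≠ 0) {x : Fin n → ℝ} (hx : x ∈ Uset P) :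
    ∃ (y : Fin n → ℝ) (σ : ℝ), afun P i y ≠ 0 ∧ |σ| = 1 ∧
      connectedComponentIn (Uset P) x = connectedComponentIn (Uset P) (lft P i σ y) := by
  have hxP : eval x P ≠ 0 := hx
  by_cases ha : afun P i x = 0
  · -- degenerate direction at x; use the sign lemma to move to a good point
    have hbx : bfun P i x = eval x P := by
      have := eval_self_eq (i := i) hma x
      rw [ha] at this
      linarith
    have hbxne : bfun P i x ≠ 0 := by rw [hbx]; exact hxP
    -- ball where bfun has the same sign as bfun x
    have hopen : IsOpen {z : Fin n → ℝ | 0 < bfun P i z * bfun P i x} :=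
      isOpen_lt continuous_const (continuous_bfun.mul continuous_const)
    have hxmem : x ∈ {z : Fin n → ℝ | 0 < bfun P i z * bfun P i x} :=
      mul_self_pos.mpr hbxne
    obtain ⟨ε, hεpos, hball⟩ := Metric.isOpen_iff.mp hopen x hxmem
    have hmaA : ∀ j : Fin n, degreeOf j (pderiv i P) ≤ 1 :=
      fun j => le_trans (MAaux.degreeOf_pderiv_le i j P) (hma j)
    obtain ⟨y, hydist, hy⟩ := MAaux4.sign_near hA hmaA (x := x) ha hεpos hbxne
    have hay : afun P i y ≠ 0 := by
      intro h
      have h' : eval y (pderiv i P) = 0 := h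
      rw [h', zero_mul] at hy
      exact lt_irrefl 0 hy
    have hydist' : dist y x < ε := by rw [dist_eq_norm]; exact hydist
    have hyb : 0 < bfun P i y * bfun P i x := hball (Metric.mem_ball.mpr hydist')
    refine ⟨y, 1, hay, by norm_num, ?_⟩
    have hc1 : connectedComponentIn (Uset P) x
        = connectedComponentIn (Uset P) (Function.update x i 0) := by
      have hcc := cc_eq_of_path (W := Uset P)
        (γ := fun t => Function.update x i t)
        (continuous_const.update i continuous_id) (s := x i) (t := 0) (fun t _ => by
          show eval (Function.update x i t) P ≠ 0
          rw [slope_eq hma, ha, zero_mul, zero_add]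
          exact hbxne)
      simp only [Function.update_eq_self] at hcc
      exact hcc
    have hc2 : connectedComponentIn (Uset P) (Function.update x i 0)
        = connectedComponentIn (Uset P) (Function.update y i 0) := by
      have h0 : Function.update (x + (0:ℝ) • (y - x)) i 0 = Function.update x i 0 := by simp
      have h1 : Function.update (x + (1:ℝ) • (y - x)) i 0 = Function.update y i 0 := by simp
      have hγ : Continuous (fun r : ℝ => Function.update (x + r • (y - x)) i (0:ℝ)) :=
        Continuous.update (continuous_const.add (continuous_id.smul continuous_const)) i
          continuous_const
      rw [← h0, ← h1]
      refine cc_eq_of_path hγ ?_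
      intro r hr
      rw [Set.uIcc_of_le (by norm_num : (0:ℝ) ≤ 1)] at hr
      obtain ⟨hr0, hr1⟩ := hr
      have hwdist : dist (x + r • (y - x)) x < ε := by
        have heq : x + r • (y - x) - x = r • (y - x) := by
          funext j
          simp only [Pi.add_apply, Pi.sub_apply, Pi.smul_apply, smul_eq_mul]
          ring
        rw [dist_eq_norm, heq, norm_smul, Real.norm_eq_abs, abs_of_nonneg hr0]
        calc r * ‖y - x‖ ≤ 1 * ‖y - x‖ := by nlinarith [norm_nonneg (y - x)]
          _ = ‖y - x‖ := one_mul _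
          _ < ε := hydist
      have hwb : 0 < bfun P i (x + r • (y - x)) * bfun P i x :=
        hball (Metric.mem_ball.mpr hwdist)
      show eval (Function.update (x + r • (y - x)) i 0) P ≠ 0
      intro h0'
      have hbw : bfun P i (x + r • (y - x)) = 0 := h0'
      rw [hbw, zero_mul] at hwb
      exact lt_irrefl 0 hwb
    have hc3 : connectedComponentIn (Uset P) (Function.update y i 0)
        = connectedComponentIn (Uset P) (lft P i 1 y) := by
      have hT := Tfun_pos hma (P := P) (i := i) y
      have hcc := cc_eq_of_path (W := Uset P)
        (γ := fun t => Function.update y i t)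
        (continuous_const.update i continuous_id) (s := 0) (t := 1 * Tfun P i y) (fun t ht => by
          rw [Set.uIcc_of_le (by linarith : (0:ℝ) ≤ 1 * Tfun P i y)] at ht
          obtain ⟨ht0, ht1⟩ := ht
          show eval (Function.update y i t) P ≠ 0
          rw [slope_eq hma]
          intro h0'
          have h2 : (afun P i y * t + bfun P i y) * bfun P i x = 0 := by rw [h0', zero_mul]
          have h1' : 0 ≤ t * (afun P i y * bfun P i x) := mul_nonneg ht0 hy.le
          nlinarith [hyb])
      exact hcc
    rw [hc1, hc2, hc3]
  · -- a x ≠ 0 : move vertically away from the root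
    set r : ℝ := -(bfun P i x) / afun P i x with hr
    have hroot : ∀ t : ℝ, t ≠ r → Function.update x i t ∈ Uset P := by
      intro t ht h0
      rw [slope_eq hma] at h0
      apply ht
      rw [hr]
      field_simp
      linarith
    have hxir : x i ≠ r := by
      intro h
      apply hxP
      rw [eval_self_eq hma, h, hr]
      field_simp
      ring
    have hrabs : |r| < Tfun P i x := by
      rw [hr, Tfun, abs_div]
      have : 0 < |afun P i x| := abs_pos.mpr ha
      rw [abs_neg]
      linarith
    rcases lt_or_gt_of_ne hxir with hlt | hgt
    · refine ⟨x, -1, ha, by norm_num, ?_⟩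
      have hcc := cc_eq_of_path (W := Uset P)
        (γ := fun t => Function.update x i t)
        (continuous_const.update i continuous_id) (s := x i) (t := -1 * Tfun P i x) ?_
      · calc connectedComponentIn (Uset P) x
            = connectedComponentIn (Uset P) (Function.update x i (x i)) := by
              rw [Function.update_eq_self]
          _ = connectedComponentIn (Uset P) (Function.update x i (-1 * Tfun P i x)) := hcc
          _ = connectedComponentIn (Uset P) (lft P i (-1) x) := rfl
      · intro t ht
        rw [Set.mem_uIcc] at ht
        refine hroot t (ne_of_lt ?_)
        have hT := Tfun_pos hma (P := P) (i := i) x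
        have h1 : -1 * Tfun P i x < r := by
          cases abs_cases r <;> nlinarith
        rcases ht with ⟨h2, h3⟩ | ⟨h2, h3⟩ <;> nlinarith
    · refine ⟨x, 1, ha, by norm_num, ?_⟩
      have hcc := cc_eq_of_path (W := Uset P)
        (γ := fun t => Function.update x i t)
        (continuous_const.update i continuous_id) (s := x i) (t := 1 * Tfun P i x) ?_
      · calc connectedComponentIn (Uset P) x
            = connectedComponentIn (Uset P) (Function.update x i (x i)) := by
              rw [Function.update_eq_self]
          _ = connectedComponentIn (Uset P) (Function.update x i (1 * Tfun P i x)) := hcc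
          _ = connectedComponentIn (Uset P) (lft P i 1 x) := rfl
      · intro t ht
        rw [Set.mem_uIcc] at ht
        refine hroot t (ne_of_gt ?_)
        have hT := Tfun_pos hma (P := P) (i := i) x
        have h1 : r < 1 * Tfun P i x := by
          cases abs_cases r <;> nlinarith
        rcases ht with ⟨h2, h3⟩ | ⟨h2, h3⟩ <;> nlinarith

end Main2

end MAtop
namespace MAtop

open MvPolynomial Finset

section Main3

variable {n : ℕ} {P : MvPolynomial (Fin n) ℝ} {i : Fin n}

lemma step_subset (hma : ∀ j : Fin n, degreeOf j P ≤ 1) (hA : pderiv i P ≠ 0) :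
    {K : Set (Fin n → ℝ) | ∃ x ∈ Uset P, K = connectedComponentIn (Uset P) x} ⊆
      (Fmap P i 1 '' {K : Set (Fin n → ℝ) | ∃ x ∈ Uset (pderiv i P),
        K = connectedComponentIn (Uset (pderiv i P)) x})
      ∪ (Fmap P i (-1) '' {K : Set (Fin n → ℝ) | ∃ x ∈ Uset (pderiv i P),
        K = connectedComponentIn (Uset (pderiv i P)) x}) := by
  rintro K ⟨x, hx, rfl⟩
  obtain ⟨y, σ, hay, hσ, heq⟩ := surj hma hA hx
  have hyV : y ∈ Uset (pderiv i P) := hay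
  have hKne : (connectedComponentIn (Uset (pderiv i P)) y).Nonempty :=
    ⟨y, mem_connectedComponentIn hyV⟩
  have hsm : hKne.some ∈ connectedComponentIn {x : Fin n → ℝ | afun P i x ≠ 0} y :=
    hKne.some_mem
  have hFk : Fmap P i σ (connectedComponentIn (Uset (pderiv i P)) y)
      = connectedComponentIn (Uset P) (lft P i σ y) := by
    rw [Fmap, dif_pos hKne]
    exact const_on_component hma hσ hay hsm
  have hσc : σ = 1 ∨ σ = -1 := (abs_eq (le_of_lt one_pos)).mp hσ
  rcases hσc with rfl | rfl
  · exact Or.inl ⟨_, ⟨y, hyV, rfl⟩, by rw [hFk, ← heq]⟩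
  · exact Or.inr ⟨_, ⟨y, hyV, rfl⟩, by rw [hFk, ← heq]⟩

end Main3

lemma const_case {n : ℕ} (P : MvPolynomial (Fin n) ℝ) (hP : P ≠ 0)
    (h0 : P.totalDegree = 0) :
    {K : Set (Fin n → ℝ) | ∃ x ∈ Uset P, K = connectedComponentIn (Uset P) x}
      = {Set.univ} := by
  have hval : ∀ x : Fin n → ℝ, eval x P ≠ 0 := by
    intro x hx
    apply hP
    apply MvPolynomial.funext
    intro y
    rw [map_zero, MAaux2.const_eval h0 y x, hx]
  have hU : Uset P = Set.univ := Set.eq_univ_of_forall fun x => hval x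
  ext K
  simp only [Set.mem_setOf_eq, Set.mem_singleton_iff]
  constructor
  · rintro ⟨x, _, rfl⟩
    rw [hU, connectedComponentIn_univ, PreconnectedSpace.connectedComponent_eq_univ]
  · rintro rfl
    refine ⟨0, hval 0, ?_⟩
    rw [hU, connectedComponentIn_univ, PreconnectedSpace.connectedComponent_eq_univ]

theorem main : ∀ (d : ℕ) {n : ℕ} (P : MvPolynomial (Fin n) ℝ), P ≠ 0 →
    (∀ i : Fin n, degreeOf i P ≤ 1) → P.totalDegree ≤ d →
    ({K : Set (Fin n → ℝ) | ∃ x ∈ Uset P, K = connectedComponentIn (Uset P) x}.Finite ∧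
     {K : Set (Fin n → ℝ) | ∃ x ∈ Uset P,
        K = connectedComponentIn (Uset P) x}.ncard ≤ 2 ^ d) := by
  intro d
  induction d with
  | zero =>
    intro n P hP hma hdeg
    rw [const_case P hP (Nat.le_zero.mp hdeg)]
    simp
  | succ d ih =>
    intro n P hP hma hdeg
    by_cases h0 : P.totalDegree = 0
    · rw [const_case P hP h0]
      simp only [Set.finite_singleton, true_and, Set.ncard_singleton]
      exact Nat.one_le_two_pow
    · obtain ⟨i, m₀, hm₀, hi⟩ := MAaux2.exists_var h0
      have hA : pderiv i P ≠ 0 := MAaux.pderiv_ne_zero hm₀ hi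
      have hmaA : ∀ j : Fin n, degreeOf j (pderiv i P) ≤ 1 :=
        fun j => le_trans (MAaux.degreeOf_pderiv_le i j P) (hma j)
      have hdegA : (pderiv i P).totalDegree ≤ d := MAaux.totalDegree_pderiv_le i P d hdeg
      obtain ⟨hfinV, hcardV⟩ := ih (pderiv i P) hA hmaA hdegA
      have hsub := step_subset hma hA
      set compsV := {K : Set (Fin n → ℝ) | ∃ x ∈ Uset (pderiv i P),
        K = connectedComponentIn (Uset (pderiv i P)) x} with hcompsV
      have hfin1 : (Fmap P i 1 '' compsV).Finite := hfinV.image _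
      have hfin2 : (Fmap P i (-1) '' compsV).Finite := hfinV.image _
      have hfinU : {K : Set (Fin n → ℝ) | ∃ x ∈ Uset P,
          K = connectedComponentIn (Uset P) x}.Finite :=
        Set.Finite.subset (hfin1.union hfin2) hsub
      refine ⟨hfinU, ?_⟩
      calc {K : Set (Fin n → ℝ) | ∃ x ∈ Uset P,
              K = connectedComponentIn (Uset P) x}.ncard
          ≤ ((Fmap P i 1 '' compsV) ∪ (Fmap P i (-1) '' compsV)).ncard :=
            Set.ncard_le_ncard hsub (hfin1.union hfin2)
        _ ≤ (Fmap P i 1 '' compsV).ncard + (Fmap P i (-1) '' compsV).ncard :=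
            Set.ncard_union_le _ _
        _ ≤ compsV.ncard + compsV.ncard :=
            Nat.add_le_add (Set.ncard_image_le hfinV) (Set.ncard_image_le hfinV)
        _ ≤ 2 ^ d + 2 ^ d := Nat.add_le_add hcardV hcardV
        _ = 2 ^ (d + 1) := by ring

end MAtop

/-- The complement of the real zero set of a non-zero multi-affine polynomial of degree
at most `d` in `n` variables has at most `2^d` connected components. -/
theorem multiaffine_complement_components_le (n d : ℕ) (hn : 1 ≤ n)
    (P : MvPolynomial (Fin n) ℝ) (hP : P ≠ 0)
    (hma : ∀ i : Fin n, P.degreeOf i ≤ 1)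
    (hdeg : P.totalDegree ≤ d) :
    letI U : Set (Fin n → ℝ) := {x | eval x P ≠ 0}
    letI comps : Set (Set (Fin n → ℝ)) := {K | ∃ x ∈ U, K = connectedComponentIn U x}
    comps.Finite ∧ comps.ncard ≤ 2 ^ d := by
  exact MAtop.main d P hP hma hdeg
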